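/- Let m > 0, ω > 0, and h ∈ ℝ. Then det(M_RK4(h)) = 1 − (hω)⁶/72 + (hω)⁸/576. Consequently, for every h with 0 < hω < 2√2 one has det(M_RK4(h)) < 1, and therefore M_RK4(h)ᵀ · J · M_RK4(h) ≠ J; that is, the fourth-order Runge–Kutta transition matrix for the harmonic oscillator is not symplectic. -/
import Mathlib


open Matrix

/-- The fourth-order Runge–Kutta transition matrix for the harmonic oscillator. -/
noncomputable def MRK4 (m ω h : ℝ) : Matrix (Fin 2) (Fin 2) ℝ :=
  !![1 - h ^ 2 * ω ^ 2 / 2 + h ^ 4 * ω ^ 4 / 24, h / m * (1 - h ^ 2 * ω ^ 2 / 6);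
     -h * m * ω ^ 2 * (1 - h ^ 2 * ω ^ 2 / 6), 1 - h ^ 2 * ω ^ 2 / 2 + h ^ 4 * ω ^ 4 / 24]

/-- The standard symplectic matrix `J = [[0,1],[-1,0]]`. -/
def J2 : Matrix (Fin 2) (Fin 2) ℝ := !![0, 1; -1, 0]

/-- `det M_RK4(h) = 1 - (hω)⁶/72 + (hω)⁸/576`; hence for `0 < hω < 2√2` the
determinant is `< 1` and `M_RK4(h)` is not symplectic. -/
theorem rk4_det_and_not_symplectic
    (m ω h : ℝ) (hm : 0 < m) (hω : 0 < ω) :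
    (MRK4 m ω h).det = 1 - (h * ω) ^ 6 / 72 + (h * ω) ^ 8 / 576 ∧
    (0 < h * ω → h * ω < 2 * Real.sqrt 2 →
      (MRK4 m ω h).det < 1 ∧ (MRK4 m ω h)ᵀ * J2 * MRK4 m ω h ≠ J2) := by
  have hdet : (MRK4 m ω h).det = 1 - (h * ω) ^ 6 / 72 + (h * ω) ^ 8 / 576 := by
    rw [MRK4, Matrix.det_fin_two_of]
    field_simp
    ring
  refine ⟨hdet, fun hx hx2 => ?_⟩
  set x := h * ω with hxdef
  have hsq : x ^ 2 < 8 := by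
    have h8 : (2 * Real.sqrt 2) ^ 2 = 8 := by
      rw [mul_pow, Real.sq_sqrt (by norm_num : (2:ℝ) ≥ 0)]; norm_num
    calc x ^ 2 < (2 * Real.sqrt 2) ^ 2 := by
          apply pow_lt_pow_left₀ hx2 (le_of_lt hx)
          norm_num
      _ = 8 := h8
  have hlt1 : (MRK4 m ω h).det < 1 := by
    rw [hdet]
    nlinarith [pow_pos hx 6, sq_nonneg x, pow_pos hx 2]
  refine ⟨hlt1, fun hsymp => ?_⟩
  have hpos : 0 < (MRK4 m ω h).det := by
    rw [hdet]
    nlinarith [pow_pos hx 2, pow_pos hx 6, sq_nonneg (x^3 - 6*x), sq_nonneg (x^2 - 6),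
      pow_pos hx 4]
  have hdJ : (J2 : Matrix (Fin 2) (Fin 2) ℝ).det = 1 := by
    rw [J2, Matrix.det_fin_two_of]; norm_num
  have := congrArg Matrix.det hsymp
  rw [Matrix.det_mul, Matrix.det_mul, Matrix.det_transpose, hdJ] at this
  have hsq1 : (MRK4 m ω h).det ^ 2 = 1 := by nlinarith [this]
  nlinarith [hsq1, hlt1, hpos]
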